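/- Let X₁, …, X_n be independent random variables with X_i exponentially distributed with rate λ_i > 0, and let v₁, …, v_n ∈ ℝ₊^n be linearly independent vectors. Let C = {Σ c_i v_i : c_i ≥ 0} be their conical span and V the matrix with columns v_i. Then P((X₁,…,X_n) ∈ C) = |det V| · Π_{i=1}^n λ_i / ⟨v_i, λ⟩, where λ = (λ₁,…,λ_n). -/

import Mathlib

open MeasureTheory ProbabilityTheory
open scoped ENNReal

theorem my_lintegral_pi_prod {n : ℕ} (μ : Fin n → Measure ℝ) [∀ i, SigmaFinite (μ i)]
    (f : Fin n → ℝ → ℝ≥0∞) (hf : ∀ i, Measurable (f i)) :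
    ∫⁻ x, ∏ i, f i (x i) ∂Measure.pi μ = ∏ i, ∫⁻ x, f i x ∂μ i := by
  induction n with
  | zero => simp
  | succ n ih =>
    have hmp := (measurePreserving_piFinSuccAbove μ 0).symm
    have hF : Measurable fun x : Fin (n+1) → ℝ => ∏ i, f i (x i) :=
      Finset.measurable_prod _ fun i _ => (hf i).comp (measurable_pi_apply i)
    rw [← hmp.lintegral_comp hF]
    have key : ∀ p : ℝ × (Fin n → ℝ),
        (∏ i, f i (((MeasurableEquiv.piFinSuccAbove (fun _ => ℝ) 0).symm p) i)) =
          f 0 p.1 * ∏ j : Fin n, f j.succ (p.2 j) := by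
      intro p
      rw [Fin.prod_univ_succ]
      simp [MeasurableEquiv.piFinSuccAbove_symm_apply, Fin.insertNthEquiv,
        Fin.insertNth_zero, Fin.zero_succAbove]
    simp_rw [key]
    rw [lintegral_prod_mul (μ := μ 0) (ν := Measure.pi fun j => μ (Fin.succAbove 0 j))
      (f := f 0) (g := fun y : Fin n → ℝ => ∏ j : Fin n, f j.succ (y j)) (hf 0).aemeasurable
      (Finset.measurable_prod _ fun j _ => (hf j.succ).comp (measurable_pi_apply j)).aemeasurable,
      ih _ _ fun j => hf j.succ, Fin.prod_univ_succ]
    simp [Fin.zero_succAbove]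

theorem my_pi_withDensity {n : ℕ} (μ : Fin n → Measure ℝ) [∀ i, SigmaFinite (μ i)]
    (f : Fin n → ℝ → ℝ≥0∞) (hf : ∀ i, Measurable (f i))
    [∀ i, SigmaFinite ((μ i).withDensity (f i))] :
    Measure.pi (fun i => (μ i).withDensity (f i)) =
      (Measure.pi μ).withDensity (fun x => ∏ i, f i (x i)) := by
  refine Measure.pi_eq (μ := fun i => (μ i).withDensity (f i)) fun s hs => ?_
  rw [withDensity_apply _ (MeasurableSet.univ_pi hs),
    ← lintegral_indicator (MeasurableSet.univ_pi hs)]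
  have key : ∀ x : Fin n → ℝ,
      (Set.pi Set.univ s).indicator (fun x => ∏ i, f i (x i)) x =
        ∏ i, (s i).indicator (f i) (x i) := by
    intro x
    by_cases hx : x ∈ Set.pi Set.univ s
    · rw [Set.indicator_of_mem hx]
      exact Finset.prod_congr rfl fun i _ =>
        (Set.indicator_of_mem (hx i (Set.mem_univ i)) _).symm
    · rw [Set.indicator_of_notMem hx]
      rw [Set.mem_univ_pi] at hx
      push_neg at hx
      obtain ⟨i, hi⟩ := hx
      exact (Finset.prod_eq_zero (Finset.mem_univ i)
        (Set.indicator_of_notMem hi _)).symm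
  simp_rw [key]
  rw [my_lintegral_pi_prod μ (fun i => (s i).indicator (f i)) (fun i => (hf i).indicator (hs i))]
  exact Finset.prod_congr rfl fun i _ => by
    rw [lintegral_indicator (hs i), withDensity_apply _ (hs i)]

/-- The probability that a vector of independent exponential random variables with rates
`λᵢ` lies in the simplicial cone spanned by linearly independent nonnegative vectors
`v₁, …, vₙ` is `|det V| ∏ᵢ λᵢ / ⟨vᵢ, λ⟩`, where `V` has columns `vᵢ`. -/
theorem exponential_prob_simplicial_cone (n : ℕ) (lam : Fin n → ℝ) (hlam : ∀ i, 0 < lam i)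
    (v : Fin n → Fin n → ℝ) (hv : ∀ i j, 0 ≤ v i j) (hli : LinearIndependent ℝ v) :
    (Measure.pi fun i => expMeasure (lam i))
        {x : Fin n → ℝ | ∃ c : Fin n → ℝ, (∀ i, 0 ≤ c i) ∧ x = ∑ i, c i • v i} =
      ENNReal.ofReal
        (|(Matrix.of fun i j => v j i).det| * ∏ i, lam i / ∑ j, v i j * lam j) := by
  classical
  set a : Fin n → ℝ := fun i => ∑ j, v i j * lam j with ha
  have hapos : ∀ i, 0 < a i := by
    intro i
    obtain ⟨j, hj⟩ : ∃ j, v i j ≠ 0 := by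
      by_contra h; push_neg at h; exact hli.ne_zero i (funext h)
    exact Finset.sum_pos' (fun j _ => mul_nonneg (hv i j) (hlam j).le)
      ⟨j, Finset.mem_univ j, mul_pos ((hv i j).lt_of_ne (Ne.symm hj)) (hlam j)⟩
  set M : Matrix (Fin n) (Fin n) ℝ := Matrix.of fun i j => v j i with hM
  have hMunit : IsUnit M := by
    rw [← Matrix.isUnit_transpose]
    exact Matrix.linearIndependent_rows_iff_isUnit.mp hli
  have hdet : M.det ≠ 0 := by
    have := Matrix.isUnit_iff_isUnit_det M |>.mp hMunit
    exact IsUnit.ne_zero this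
  set L : (Fin n → ℝ) →L[ℝ] (Fin n → ℝ) :=
    LinearMap.toContinuousLinearMap (Matrix.toLin' M) with hL
  have hLapp : ∀ c, L c = M.mulVec c := fun c => by
    rw [hL, LinearMap.coe_toContinuousLinearMap']
    exact Matrix.toLin'_apply M c
  have hLdet : L.det = M.det := by
    rw [ContinuousLinearMap.det, hL, LinearMap.coe_toContinuousLinearMap,
      LinearMap.det_toLin']
  have hLinj : Function.Injective L := by
    intro x y hxy
    exact Matrix.mulVec_injective_iff_isUnit.mpr hMunit (by rw [← hLapp, ← hLapp, hxy])
  set orth : Set (Fin n → ℝ) := Set.pi Set.univ (fun _ : Fin n => Set.Ici (0:ℝ)) with horthdef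
  have horth : MeasurableSet orth := MeasurableSet.univ_pi fun _ => measurableSet_Ici
  have hset : {x : Fin n → ℝ | ∃ c : Fin n → ℝ, (∀ i, 0 ≤ c i) ∧ x = ∑ i, c i • v i}
      = L '' orth := by
    ext x
    simp only [Set.mem_setOf_eq, Set.mem_image, horthdef, Set.mem_pi, Set.mem_univ,
      Set.mem_Ici, forall_true_left]
    constructor
    · rintro ⟨c, hc, rfl⟩
      refine ⟨c, fun i => hc i, ?_⟩
      rw [hLapp]
      ext k
      simp [Matrix.mulVec, dotProduct, hM, Finset.sum_apply, mul_comm]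
    · rintro ⟨c, hc, rfl⟩
      refine ⟨c, fun i => hc i, ?_⟩
      rw [hLapp]
      ext k
      simp [Matrix.mulVec, dotProduct, hM, Finset.sum_apply, mul_comm]
  have hSmeas : MeasurableSet (L '' orth) := by
    have hsurj : Function.Surjective L :=
      LinearMap.injective_iff_surjective.mp hLinj
    let E : (Fin n → ℝ) ≃ₗ[ℝ] (Fin n → ℝ) :=
      LinearEquiv.ofBijective (L : (Fin n → ℝ) →ₗ[ℝ] (Fin n → ℝ)) ⟨hLinj, hsurj⟩
    have himg : L '' orth = E.toContinuousLinearEquiv.toHomeomorph '' orth := by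
      apply Set.image_congr
      intro c _
      rfl
    rw [himg]
    exact (Homeomorph.measurableEmbedding _).measurableSet_image.2 horth
  have hexp : ∀ r : ℝ, expMeasure r = (volume : Measure ℝ).withDensity (exponentialPDF r) :=
    fun r => rfl
  have hpdfmeas : ∀ r : ℝ, Measurable (exponentialPDF r) := fun r =>
    (measurable_exponentialPDFReal r).ennreal_ofReal
  have hSFgen : ∀ r : ℝ, 0 < r →
      SigmaFinite ((volume : Measure ℝ).withDensity (exponentialPDF r)) := by
    intro r hr
    have : IsProbabilityMeasure ((volume : Measure ℝ).withDensity (exponentialPDF r)) := by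
      rw [← hexp r]; exact isProbabilityMeasure_expMeasure hr
    infer_instance
  have hfac : ∀ r : ℝ, 0 < r →
      (volume : Measure ℝ).withDensity (exponentialPDF r) (Set.Ici 0) = 1 := by
    intro r hr
    rw [← hexp r]
    haveI := isProbabilityMeasure_expMeasure hr
    have h0 : expMeasure r (Set.Iio 0) = 0 := by
      rw [hexp r, withDensity_apply _ measurableSet_Iio]
      exact lintegral_exponentialPDF_of_nonpos le_rfl
    rw [← Set.compl_Iio, measure_compl measurableSet_Iio (measure_ne_top _ _), h0,
      measure_univ, tsub_zero]
  haveI : ∀ i, SigmaFinite ((volume : Measure ℝ).withDensity (exponentialPDF (lam i))) :=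
    fun i => hSFgen _ (hlam i)
  have hpi : (Measure.pi fun i => expMeasure (lam i)) =
      (volume : Measure (Fin n → ℝ)).withDensity
        (fun x => ∏ i, exponentialPDF (lam i) (x i)) := by
    have h := my_pi_withDensity (fun _ : Fin n => (volume : Measure ℝ))
      (fun i => exponentialPDF (lam i)) (fun i => hpdfmeas _)
    rw [volume_pi]
    simp_rw [hexp]
    exact h
  -- sum identity and pointwise density identity on the orthant
  have hane : (∏ i, a i) ≠ 0 := Finset.prod_ne_zero_iff.mpr fun i _ => (hapos i).ne'
  have hptwise : ∀ c ∈ orth,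
      ENNReal.ofReal |M.det| * ∏ i, exponentialPDF (lam i) (L c i) =
        ENNReal.ofReal (|M.det| * ∏ i, lam i / a i) * ∏ j, exponentialPDF (a j) (c j) := by
    intro c hc
    have hcnn : ∀ j, 0 ≤ c j := fun j => hc j (Set.mem_univ j)
    have hLc : ∀ k, L c k = ∑ i, v i k * c i := by
      intro k; rw [hLapp]; simp [Matrix.mulVec, dotProduct, hM]
    have hLcnn : ∀ k, 0 ≤ L c k := fun k => by
      rw [hLc]; exact Finset.sum_nonneg fun i _ => mul_nonneg (hv i k) (hcnn i)
    have hsum : ∑ i, lam i * L c i = ∑ j, a j * c j := by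
      simp_rw [hLc, Finset.mul_sum, ha]
      rw [Finset.sum_comm]
      refine Finset.sum_congr rfl fun j _ => ?_
      rw [Finset.sum_mul]
      exact Finset.sum_congr rfl fun k _ => by ring
    have h1 : (∏ i, exponentialPDF (lam i) (L c i)) =
        ENNReal.ofReal ((∏ i, lam i) * Real.exp (-∑ j, a j * c j)) := by
      rw [Finset.prod_congr rfl fun i (_ : i ∈ Finset.univ) =>
        exponentialPDF_of_nonneg (r := lam i) (hLcnn i)]
      rw [← ENNReal.ofReal_prod_of_nonneg fun i _ =>
        mul_nonneg (hlam i).le (Real.exp_nonneg _)]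
      rw [Finset.prod_mul_distrib, ← Real.exp_sum]
      congr 2
      rw [← hsum]
      simp
    have h2 : (∏ j, exponentialPDF (a j) (c j)) =
        ENNReal.ofReal ((∏ j, a j) * Real.exp (-∑ j, a j * c j)) := by
      rw [Finset.prod_congr rfl fun j (_ : j ∈ Finset.univ) =>
        exponentialPDF_of_nonneg (r := a j) (hcnn j)]
      rw [← ENNReal.ofReal_prod_of_nonneg fun j _ =>
        mul_nonneg (hapos j).le (Real.exp_nonneg _)]
      rw [Finset.prod_mul_distrib, ← Real.exp_sum]
      congr 2
      simp
    rw [h1, h2, ← ENNReal.ofReal_mul (abs_nonneg _), ← ENNReal.ofReal_mul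
      (mul_nonneg (abs_nonneg _)
        (Finset.prod_nonneg fun i _ => div_nonneg (hlam i).le (hapos i).le))]
    congr 1
    rw [Finset.prod_div_distrib]
    field_simp
  -- assemble
  rw [hpi, hset, withDensity_apply _ hSmeas,
    lintegral_image_eq_lintegral_abs_det_fderiv_mul volume horth
      (fun x _ => L.hasFDerivAt.hasFDerivWithinAt) hLinj.injOn
      (fun x => ∏ i, exponentialPDF (lam i) (x i))]
  simp_rw [hLdet]
  rw [setLIntegral_congr_fun horth hptwise]
  rw [lintegral_const_mul _
    (show Measurable fun x : Fin n → ℝ => ∏ j, exponentialPDF (a j) (x j) from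
      Finset.measurable_prod _ fun j _ => (hpdfmeas (a j)).comp (measurable_pi_apply j))]
  have hone : ∫⁻ c in orth, ∏ j, exponentialPDF (a j) (c j) ∂(volume) = 1 := by
    haveI : ∀ i : Fin n, SigmaFinite ((volume : Measure ℝ).withDensity (exponentialPDF (a i))) :=
      fun i => hSFgen _ (hapos i)
    rw [← withDensity_apply _ horth, volume_pi,
      ← my_pi_withDensity (fun _ : Fin n => (volume : Measure ℝ))
        (fun j => exponentialPDF (a j)) (fun j => hpdfmeas _),
      horthdef, Measure.pi_pi]
    rw [Finset.prod_congr rfl fun i (_ : i ∈ Finset.univ) => hfac (a i) (hapos i)]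
    simp
  rw [hone, mul_one]
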